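/- Let ℓ > 0, let p : [−ℓ,ℓ] → ℝ be continuously differentiable with p(x) > 0 for every x ∈ [−ℓ,ℓ], let U : [−ℓ,ℓ] → ℝ be continuously differentiable, and let λ ∈ ℝ. Suppose φ : [−ℓ,ℓ] → ℝ is twice continuously differentiable with φ(−ℓ) = φ(ℓ) = 0, φ(x) > 0 for every x ∈ (−ℓ,ℓ), φ'(ℓ) < 0, φ'(−ℓ) > 0, and p(x) φ''(x) + p'(x) φ'(x) − (U φ)'(x) = λ φ(x) for every x ∈ [−ℓ,ℓ]. Then λ ∫_{−ℓ}^{ℓ} φ(x) dx = p(ℓ) φ'(ℓ) − p(−ℓ) φ'(−ℓ), and consequently λ < 0. -/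
import Mathlib


/-- if `φ > 0` on `(−ℓ,ℓ)` vanishes at `±ℓ`, has `φ'(ℓ) < 0 < φ'(−ℓ)`,
and solves `p φ'' + p' φ' − (U φ)' = λ φ` on `[−ℓ,ℓ]` with `p > 0`, then
`λ ∫ φ = p(ℓ) φ'(ℓ) − p(−ℓ) φ'(−ℓ)` and consequently `λ < 0`. -/
theorem first_eigenvalue_neg
    (ℓ lam : ℝ) (hℓ : 0 < ℓ)
    (p p' U U' φ φ' φ'' : ℝ → ℝ)
    (hp : ∀ x ∈ Set.Icc (-ℓ) ℓ, HasDerivWithinAt p (p' x) (Set.Icc (-ℓ) ℓ) x)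
    (hp'c : ContinuousOn p' (Set.Icc (-ℓ) ℓ))
    (hppos : ∀ x ∈ Set.Icc (-ℓ) ℓ, 0 < p x)
    (hU : ∀ x ∈ Set.Icc (-ℓ) ℓ, HasDerivWithinAt U (U' x) (Set.Icc (-ℓ) ℓ) x)
    (hU'c : ContinuousOn U' (Set.Icc (-ℓ) ℓ))
    (hφ : ∀ x ∈ Set.Icc (-ℓ) ℓ, HasDerivWithinAt φ (φ' x) (Set.Icc (-ℓ) ℓ) x)
    (hφ' : ∀ x ∈ Set.Icc (-ℓ) ℓ, HasDerivWithinAt φ' (φ'' x) (Set.Icc (-ℓ) ℓ) x)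
    (hφ''c : ContinuousOn φ'' (Set.Icc (-ℓ) ℓ))
    (hbd : φ (-ℓ) = 0 ∧ φ ℓ = 0)
    (hpos : ∀ x ∈ Set.Ioo (-ℓ) ℓ, 0 < φ x)
    (hslope : φ' ℓ < 0 ∧ 0 < φ' (-ℓ))
    (heq : ∀ x ∈ Set.Icc (-ℓ) ℓ,
      p x * φ'' x + p' x * φ' x - (U' x * φ x + U x * φ' x) = lam * φ x) :
    lam * (∫ x in (-ℓ)..ℓ, φ x) = p ℓ * φ' ℓ - p (-ℓ) * φ' (-ℓ) ∧ lam < 0 := by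
  obtain ⟨hb1, hb2⟩ := hbd
  obtain ⟨hs1, hs2⟩ := hslope
  have hle : (-ℓ) ≤ ℓ := by linarith
  have hlt : (-ℓ) < ℓ := by linarith
  set F : ℝ → ℝ := fun x => p x * φ' x - U x * φ x with hF
  have hφc : ContinuousOn φ (Set.Icc (-ℓ) ℓ) :=
    fun x hx => (hφ x hx).continuousWithinAt
  have hφ'cont : ContinuousOn φ' (Set.Icc (-ℓ) ℓ) :=
    fun x hx => (hφ' x hx).continuousWithinAt
  have hpc : ContinuousOn p (Set.Icc (-ℓ) ℓ) :=
    fun x hx => (hp x hx).continuousWithinAt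
  have hUc : ContinuousOn U (Set.Icc (-ℓ) ℓ) :=
    fun x hx => (hU x hx).continuousWithinAt
  have hFc : ContinuousOn F (Set.Icc (-ℓ) ℓ) :=
    ((hpc.mul hφ'cont).sub (hUc.mul hφc))
  have hFd : ∀ x ∈ Set.Ioo (-ℓ) ℓ, HasDerivWithinAt F (lam * φ x) (Set.Ioi x) x := by
    intro x hx
    have hxI : x ∈ Set.Icc (-ℓ) ℓ := Set.Ioo_subset_Icc_self hx
    have hnhds : Set.Icc (-ℓ) ℓ ∈ nhds x := Icc_mem_nhds hx.1 hx.2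
    have hd : HasDerivAt F (p' x * φ' x + p x * φ'' x - (U' x * φ x + U x * φ' x)) x := by
      exact (((hp x hxI).hasDerivAt hnhds).mul ((hφ' x hxI).hasDerivAt hnhds)).sub
        (((hU x hxI).hasDerivAt hnhds).mul ((hφ x hxI).hasDerivAt hnhds))
    have : p' x * φ' x + p x * φ'' x - (U' x * φ x + U x * φ' x) = lam * φ x := by
      have := heq x hxI; linarith
    rw [this] at hd
    exact hd.hasDerivWithinAt
  have hint : IntervalIntegrable (fun x => lam * φ x) MeasureTheory.volume (-ℓ) ℓ := by
    apply ContinuousOn.intervalIntegrable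
    rw [Set.uIcc_of_le hle]
    exact continuousOn_const.mul hφc
  have hFTC : ∫ x in (-ℓ)..ℓ, lam * φ x = F ℓ - F (-ℓ) :=
    intervalIntegral.integral_eq_sub_of_hasDeriv_right_of_le hle hFc hFd hint
  have hmul : lam * (∫ x in (-ℓ)..ℓ, φ x) = p ℓ * φ' ℓ - p (-ℓ) * φ' (-ℓ) := by
    rw [← intervalIntegral.integral_const_mul, hFTC, hF]
    simp [hb1, hb2]
  refine ⟨hmul, ?_⟩
  have hIpos : 0 < ∫ x in (-ℓ)..ℓ, φ x := by
    apply intervalIntegral.intervalIntegral_pos_of_pos_on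
    · apply ContinuousOn.intervalIntegrable
      rwa [Set.uIcc_of_le hle]
    · exact hpos
    · exact hlt
  have hRneg : p ℓ * φ' ℓ - p (-ℓ) * φ' (-ℓ) < 0 := by
    have h1 := hppos ℓ (by constructor <;> linarith)
    have h2 := hppos (-ℓ) (by constructor <;> linarith)
    nlinarith
  nlinarith [hmul, hIpos, hRneg]
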